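/- For any trees τ ∈ 𝒩 and τ̄ ∈ 𝒩̊ with C₊(τ, τ̄) ≠ 0, the coefficient map satisfies Υ(τ̄) = (-1)^{(m(τ)-1)/2} · Υ(C₊(τ, τ̄)), where Υ is extended multiplicatively over forests and Υ(I(σ)) := Υ(σ), Υ(I⁺_i(σ)) := Υ(σ). -/
import Mathlib


/-- Trees built from generators `𝟏`, `X i`, `Ξ` by the ternary product
`τ₁,τ₂,τ₃ ↦ I(τ₁)I(τ₂)I(τ₃)`. -/
inductive T (d : ℕ) : Type
  | one : T d
  | X : Fin d → T d
  | Xi : T d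
  | prod : T d → T d → T d → T d
deriving DecidableEq

namespace T

variable {d : ℕ}

/-- The order of a tree, with parameter `δ`. -/
noncomputable def order (δ : ℝ) : T d → ℝ
  | one => -2
  | X _ => -1
  | Xi => -3 + δ
  | prod a b c => 6 + order δ a + order δ b + order δ c

/-- Number of `𝟏`-leaves. -/
def mOne : T d → ℕ
  | one => 1
  | X _ => 0
  | Xi => 0
  | prod a b c => mOne a + mOne b + mOne c

/-- Total number of `X i`-leaves. -/
def mX : T d → ℕ
  | one => 0
  | X _ => 1
  | Xi => 0
  | prod a b c => mX a + mX b + mX c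

/-- Number of noise leaves `Ξ`. -/
def mXi : T d → ℕ
  | one => 0
  | X _ => 0
  | Xi => 1
  | prod a b c => mXi a + mXi b + mXi c

end T

namespace T
/-- Whether a tree is a ternary product (i.e. not a generator). -/
def isProd {d : ℕ} : T d → Bool
  | prod _ _ _ => true
  | _ => false

/-- Membership in `Ñ`: ternary-product trees of order in `(-1, 0)`. -/
def inTildeN {d : ℕ} (δ : ℝ) (τ : T d) : Prop :=
  isProd τ = true ∧ -1 < order δ τ ∧ order δ τ < 0

noncomputable instance {d : ℕ} (δ : ℝ) (τ : T d) : Decidable (inTildeN δ τ) := by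
  unfold inTildeN; infer_instance
end T

/-- Planted trees: `I(τ)` and the derivative-planted trees `I⁺ᵢ(τ)`. -/
inductive PT (d : ℕ) : Type
  | I : T d → PT d
  | Ip : Fin d → T d → PT d
deriving DecidableEq

/-- The cut map `C₊(τ̄, τ)`, returning a forest of planted trees, or `none`
(representing `0`).  This is the recursive definition of Table 1; the zero
conventions `I⁺ᵢ(X_j) = 0` for `j ≠ i`, `I⁺ᵢ(τ) = 0` for `τ ∉ Ñ` and the
projection `p₊` onto planted trees of positive order are built in. -/
noncomputable def Cplus {d : ℕ} (δ : ℝ) : T d → T d → Option (List (PT d))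
  | T.one, T.one => some [PT.I T.one]
  | T.one, T.X j => some [PT.I (T.X j)]
  | T.one, T.prod x y z =>
      if 0 < T.order δ (T.prod x y z) + 2 then some [PT.I (T.prod x y z)] else none
  | T.X i, T.X j => if i = j then some [PT.Ip i (T.X j)] else none
  | T.X i, T.prod x y z =>
      if T.inTildeN δ (T.prod x y z) then some [PT.Ip i (T.prod x y z)] else none
  | T.Xi, T.Xi => some []
  | T.prod a b c, T.prod x y z =>
      match Cplus δ a x, Cplus δ b y, Cplus δ c z with
      | some f1, some f2, some f3 => some (f1 ++ f2 ++ f3)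
      | _, _, _ => none
  | _, _ => none

namespace PT
/-- Leaf counts extended to planted trees. -/
def mOne {d : ℕ} : PT d → ℕ
  | I τ => T.mOne τ
  | Ip _ τ => T.mOne τ

def mX {d : ℕ} : PT d → ℕ
  | I τ => T.mX τ
  | Ip _ τ => T.mX τ

def mXi {d : ℕ} : PT d → ℕ
  | I τ => T.mXi τ
  | Ip _ τ => T.mXi τ
end PT

/-- Leaf counts extended to forests of planted trees, by summation. -/
def FmOne {d : ℕ} (f : List (PT d)) : ℕ := (f.map PT.mOne).sum
def FmX {d : ℕ} (f : List (PT d)) : ℕ := (f.map PT.mX).sum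
def FmXi {d : ℕ} (f : List (PT d)) : ℕ := (f.map PT.mXi).sum

namespace T
/-- Total number of leaves of a tree. -/
def m {d : ℕ} (τ : T d) : ℕ := T.mOne τ + T.mX τ + T.mXi τ
end T

/-- The coefficient map `Υ`, defined recursively from parameters `v_𝟏` and `v_X`. -/
noncomputable def Ups {d : ℕ} (v1 : ℝ) (vX : Fin d → ℝ) : T d → ℝ
  | .one => v1
  | .X i => vX i
  | .Xi => 1
  | .prod a b c => -(Ups v1 vX a * Ups v1 vX b * Ups v1 vX c)

/-- `Υ` extended to planted trees: `Υ(I(σ)) = Υ(σ)` and `Υ(I⁺ᵢ(σ)) = Υ(σ)`. -/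
noncomputable def UpsP {d : ℕ} (v1 : ℝ) (vX : Fin d → ℝ) : PT d → ℝ
  | .I τ => Ups v1 vX τ
  | .Ip _ τ => Ups v1 vX τ

/-- `Υ` extended multiplicatively to forests of planted trees. -/
noncomputable def UpsF {d : ℕ} (v1 : ℝ) (vX : Fin d → ℝ) (f : List (PT d)) : ℝ :=
  (f.map (UpsP v1 vX)).prod

lemma T.m_odd {d : ℕ} (τ : T d) : Odd (T.m τ) := by
  induction τ with
  | one => exact ⟨0, rfl⟩
  | X i => exact ⟨0, rfl⟩
  | Xi => exact ⟨0, rfl⟩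
  | prod a b c ha hb hc =>
    obtain ⟨x, hx⟩ := ha; obtain ⟨y, hy⟩ := hb; obtain ⟨z, hz⟩ := hc
    exact ⟨x + y + z + 1, by simp [T.m, T.mOne, T.mX, T.mXi] at *; omega⟩

lemma UpsF_append {d : ℕ} (v1 : ℝ) (vX : Fin d → ℝ) (f g : List (PT d)) :
    UpsF v1 vX (f ++ g) = UpsF v1 vX f * UpsF v1 vX g := by
  simp [UpsF]

lemma Ups_key {d : ℕ} (δ : ℝ) (v1 : ℝ) (vX : Fin d → ℝ) :
    ∀ (τ τbar : T d) (f : List (PT d)), Cplus δ τ τbar = some f →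
      Ups v1 vX τbar = (-1 : ℝ) ^ ((T.m τ - 1) / 2) * UpsF v1 vX f := by
  intro τ
  induction τ with
  | one =>
    intro τbar f h
    cases τbar with
    | one => simp [Cplus] at h; subst h; simp [Ups, UpsF, UpsP, T.m, T.mOne, T.mX, T.mXi]
    | X j => simp [Cplus] at h; subst h; simp [Ups, UpsF, UpsP, T.m, T.mOne, T.mX, T.mXi]
    | Xi => simp [Cplus] at h
    | prod x y z =>
      simp only [Cplus] at h
      split at h
      · simp at h; subst h
        simp [UpsF, UpsP, T.m, T.mOne, T.mX, T.mXi]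
      · simp at h
  | X i =>
    intro τbar f h
    cases τbar with
    | one => simp [Cplus] at h
    | X j =>
      simp only [Cplus] at h
      split at h
      · simp at h; subst h; simp_all [Ups, UpsF, UpsP, T.m, T.mOne, T.mX, T.mXi]
      · simp at h
    | Xi => simp [Cplus] at h
    | prod x y z =>
      simp only [Cplus] at h
      split at h
      · simp at h; subst h; simp [UpsF, UpsP, T.m, T.mOne, T.mX, T.mXi]
      · simp at h
  | Xi =>
    intro τbar f h
    cases τbar with
    | one => simp [Cplus] at h
    | X j => simp [Cplus] at h
    | Xi => simp [Cplus] at h; subst h; simp [Ups, UpsF, T.m, T.mOne, T.mX, T.mXi]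
    | prod x y z => simp [Cplus] at h
  | prod a b c ha hb hc =>
    intro τbar f h
    cases τbar with
    | one => simp [Cplus] at h
    | X j => simp [Cplus] at h
    | Xi => simp [Cplus] at h
    | prod x y z =>
      simp only [Cplus] at h
      cases h1 : Cplus δ a x with
      | none => rw [h1] at h; simp at h
      | some f1 =>
        cases h2 : Cplus δ b y with
        | none => rw [h1, h2] at h; simp at h
        | some f2 =>
          cases h3 : Cplus δ c z with
          | none => rw [h1, h2, h3] at h; simp at h
          | some f3 =>
            rw [h1, h2, h3] at h
            simp only [Option.some.injEq] at h; subst h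
            obtain ⟨ka, hka⟩ := T.m_odd a
            obtain ⟨kb, hkb⟩ := T.m_odd b
            obtain ⟨kc, hkc⟩ := T.m_odd c
            have hm : T.m (T.prod a b c) = T.m a + T.m b + T.m c := by
              simp [T.m, T.mOne, T.mX, T.mXi]; ring
            have he : (T.m (T.prod a b c) - 1) / 2 =
                (T.m a - 1) / 2 + (T.m b - 1) / 2 + (T.m c - 1) / 2 + 1 := by
              omega
            rw [he, UpsF_append, UpsF_append]
            have := ha x f1 h1
            have := hb y f2 h2
            have := hc z f3 h3
            simp only [Ups, *]
            ring

/-- for `τ ∈ 𝒩` and `τ̄ ∈ 𝒩̊` with `C₊(τ, τ̄) ≠ 0`,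
`Υ(τ̄) = (-1)^{(m(τ)-1)/2} · Υ(C₊(τ, τ̄))`. -/
theorem Ups_coherence (d : ℕ) (δ : ℝ) (hδ : 0 < δ)
    (v1 : ℝ) (vX : Fin d → ℝ) (τ τbar : T d) (f : List (PT d))
    (hτ : -2 ≤ T.order δ τ ∧ T.order δ τ ≤ 0)
    (hτbar : T.isProd τbar = true ∧ -2 ≤ T.order δ τbar ∧ T.order δ τbar ≤ 0)
    (h : Cplus δ τ τbar = some f) :
    Ups v1 vX τbar = (-1 : ℝ) ^ ((T.m τ - 1) / 2) * UpsF v1 vX f := by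
  exact Ups_key δ v1 vX τ τbar f h
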